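/- In the elliptic surface Y² = X³ + aX² + 8(r-1)⁴(r+1)⁵bt²X + 16(r-1)⁸(r+1)¹⁰ct⁴ with a, b, c, d, p(r) defined as: p(r) = 4(r-1)(r²-2)+1, d = (r²-1)²(9t + (2r-1)p(r)), c = 9t² - (2r-1)(8r²+4r-22)t + (2r-1)²p(r), b = (t-(r²-2r))c + d, a = (t-(r²-2r))²c + 2(t-(r²-2r))d + (r²-1)⁴((4r+4)t + p(r)), the point with X = -4(r-1)⁴(r+1)⁵(2r-1)t²/(r²-r+1)² + 4(r-2)(r+1)⁴t³/(r²-r+1) lies on the surface, i.e., X³ + aX² + 8(r-1)⁴(r+1)⁵bt²X + 16(r-1)⁸(r+1)¹⁰ct⁴ is a square in ℚ(r)[t]. -/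

import Mathlib

theorem aux14_key {K : Type*} [Field K] (N M A B C q : K) (hq : q ≠ 0)
    (h : N ^ 2 = M ^ 3 + A * M ^ 2 * q ^ 2 + B * M * q ^ 4 + C * q ^ 6) :
    (N / q ^ 3) ^ 2 = (M / q ^ 2) ^ 3 + A * (M / q ^ 2) ^ 2 + B * (M / q ^ 2) + C := by
  field_simp
  linear_combination h

set_option maxHeartbeats 4000000 in
theorem aux14 {K : Type*} [Field K] (r t : K) (hq : r ^ 2 - r + 1 ≠ 0) :
    ((t ^ 3 * ((-16) + (100) * r + (-56) * r ^ 2 + (-240) * r ^ 3 + (604) * r ^ 4 + (40) * r ^ 5 + (-1288) * r ^ 6 + (636) * r ^ 7 + (1320) * r ^ 8 + (-928) * r ^ 9 + (-680) * r ^ 10 + (568) * r ^ 11 + (156) * r ^ 12 + (-164) * r ^ 13 + (-8) * r ^ 14 + (20) * r ^ 15) + t ^ 4 * ((52) + (-28) * r + (-40) * r ^ 2 + (388) * r ^ 3 + (120) * r ^ 4 + (-396) * r ^ 5 + (264) * r ^ 6 + (324) * r ^ 7 + (-348) * r ^ 8 + (-104) * r ^ 9 + (176) * r ^ 10 + (8)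 * r ^ 11 + (-32) * r ^ 12) + t ^ 5 * ((-24) + (-36) * r + (-36) * r ^ 3 + (-72) * r ^ 4 + (-36) * r ^ 7 + (12) * r ^ 9)) / (r ^ 2 - r + 1) ^ 3) ^ 2 =
    (-(4 * (r - 1) ^ 4 * (r + 1) ^ 5 * (2 * r - 1) * t ^ 2) / (r ^ 2 - r + 1) ^ 2 + 4 * (r - 2) * (r + 1) ^ 4 * t ^ 3 / (r ^ 2 - r + 1)) ^ 3 + ((t - (r ^ 2 - 2 * r)) ^ 2 * (9 * t ^ 2 - (2 * r - 1) * (8 * r ^ 2 + 4 * r - 22) * t + (2 * r - 1) ^ 2 * (4 * (r - 1) * (r ^ 2 - 2) + 1)) + 2 * (t - (r ^ 2 - 2 * r)) * ((r ^ 2 - 1) ^ 2 * (9 * t + (2 * r - 1) * (4 * (r - 1) * (r ^ 2 - 2) + 1))) + (r ^ 2 - 1) ^ 4 * ((4 * r + 4) * t + (4 * (r - 1) * (r ^ 2 - 2) + 1))) * (-(4 * (r - 1) ^ 4 * (r + 1) ^ 5 * (2 * r - 1) * t ^ 2) / (r ^ 2 - r + 1) ^ 2 + 4 * (r - 2) *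 (r + 1) ^ 4 * t ^ 3 / (r ^ 2 - r + 1)) ^ 2 + 8 * (r - 1) ^ 4 * (r + 1) ^ 5 * ((t - (r ^ 2 - 2 * r)) * (9 * t ^ 2 - (2 * r - 1) * (8 * r ^ 2 + 4 * r - 22) * t + (2 * r - 1) ^ 2 * (4 * (r - 1) * (r ^ 2 - 2) + 1)) + ((r ^ 2 - 1) ^ 2 * (9 * t + (2 * r - 1) * (4 * (r - 1) * (r ^ 2 - 2) + 1)))) * t ^ 2 * (-(4 * (r - 1) ^ 4 * (r + 1) ^ 5 * (2 * r - 1) * t ^ 2) / (r ^ 2 - r + 1) ^ 2 + 4 * (r - 2) * (r + 1) ^ 4 * t ^ 3 / (r ^ 2 - r + 1)) + 16 * (r - 1) ^ 8 * (r + 1) ^ 10 * (9 * t ^ 2 - (2 * r - 1) * (8 * r ^ 2 + 4 * r - 22) * t + (2 * r - 1) ^ 2 * (4 * (r - 1) * (r ^ 2 - 2) + 1)) * t ^ 4 := by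
  have hX : (-(4 * (r - 1) ^ 4 * (r + 1) ^ 5 * (2 * r - 1) * t ^ 2) / (r ^ 2 - r + 1) ^ 2 + 4 * (r - 2) * (r + 1) ^ 4 * t ^ 3 / (r ^ 2 - r + 1)) = (4 * (r - 2) * (r + 1) ^ 4 * t ^ 3 * (r ^ 2 - r + 1) - 4 * (r - 1) ^ 4 * (r + 1) ^ 5 * (2 * r - 1) * t ^ 2) / (r ^ 2 - r + 1) ^ 2 := by
    field_simp
    ring
  rw [hX]
  refine aux14_key _ _ _ _ _ _ hq ?_
  ring

/-- In the `N = 57` family, the given `X` of height `19/12` lies on the surface: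
the corresponding right-hand side is a square in `ℚ(r)(t)`. -/
theorem stmt14 :
    ∃ Y : RatFunc (RatFunc ℚ),
      let r : RatFunc (RatFunc ℚ) := RatFunc.C RatFunc.X
      let t : RatFunc (RatFunc ℚ) := RatFunc.X
      let p := 4 * (r - 1) * (r ^ 2 - 2) + 1
      let d := (r ^ 2 - 1) ^ 2 * (9 * t + (2 * r - 1) * p)
      let c := 9 * t ^ 2 - (2 * r - 1) * (8 * r ^ 2 + 4 * r - 22) * t + (2 * r - 1) ^ 2 * p
      let b := (t - (r ^ 2 - 2 * r)) * c + d
      let a := (t - (r ^ 2 - 2 * r)) ^ 2 * c + 2 * (t - (r ^ 2 - 2 * r)) * d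
        + (r ^ 2 - 1) ^ 4 * ((4 * r + 4) * t + p)
      let X := -(4 * (r - 1) ^ 4 * (r + 1) ^ 5 * (2 * r - 1) * t ^ 2) / (r ^ 2 - r + 1) ^ 2
        + 4 * (r - 2) * (r + 1) ^ 4 * t ^ 3 / (r ^ 2 - r + 1)
      Y ^ 2 = X ^ 3 + a * X ^ 2 + 8 * (r - 1) ^ 4 * (r + 1) ^ 5 * b * t ^ 2 * X
        + 16 * (r - 1) ^ 8 * (r + 1) ^ 10 * c * t ^ 4 := by
  have h0 : (RatFunc.X ^ 2 - RatFunc.X + 1 : RatFunc ℚ) ≠ 0 := by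
    have hp : (Polynomial.X ^ 2 - Polynomial.X + 1 : Polynomial ℚ) ≠ 0 := by
      intro h
      simpa using congrArg (Polynomial.eval 0) h
    simpa [map_add, map_sub, map_pow, RatFunc.algebraMap_X, map_one] using
      RatFunc.algebraMap_ne_zero hp
  have hq1 : (RatFunc.C (RatFunc.X ^ 2 - RatFunc.X + 1 : RatFunc ℚ) : RatFunc (RatFunc ℚ)) ≠ 0 :=
    fun h => h0 ((RatFunc.C : RatFunc ℚ →+* RatFunc (RatFunc ℚ)).injective
      (h.trans (map_zero _).symm))
  rw [map_add, map_sub, map_pow, map_one] at hq1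
  exact ⟨_, aux14 (RatFunc.C (RatFunc.X : RatFunc ℚ)) (RatFunc.X : RatFunc (RatFunc ℚ)) hq1⟩
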